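/- For every α > 0 there exists η0 > 0 such that for every 0 < η < η0 there exists a natural number n0 such that the following holds for all n ≥ n0: if H is a 3-graph on n vertices with minimum codegree δ(H) ≥ n/3 + αn, then every set of three distinct vertices of H contains two distinct vertices which are (η, 1)-linked in H. -/

import Mathlib

open Finset

/-- `H` is a 3-uniform hypergraph (every edge has exactly 3 vertices). -/
def Is3Graph {V : Type*} [DecidableEq V] (H : Finset (Finset V)) : Prop :=
  ∀ e ∈ H, e.card = 3

/-- The codegree of the pair `x, y` in `H`: the number of edges containing both. -/
def codeg {V : Type*} [DecidableEq V] (H : Finset (Finset V)) (x y : V) : ℕ :=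
  (H.filter fun e => x ∈ e ∧ y ∈ e).card

/-- A 5-set `S` supports a copy of the generalised triangle `T` in `H`. -/
def SupportsT {V : Type*} [DecidableEq V] (H : Finset (Finset V)) (S : Finset V) : Prop :=
  ∃ a b c d e : V, ({a, b, c, d, e} : Finset V).card = 5 ∧
    ({a, b, c, d, e} : Finset V) = S ∧
    ({a, b, c} : Finset V) ∈ H ∧ ({a, b, d} : Finset V) ∈ H ∧ ({c, d, e} : Finset V) ∈ H

/-- `P` is a `T`-tiling in `H`: a collection of pairwise disjoint 5-sets, each
supporting a copy of the generalised triangle. -/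
def IsTTiling {V : Type*} [DecidableEq V] (H P : Finset (Finset V)) : Prop :=
  (∀ S ∈ P, SupportsT H S) ∧ (P : Set (Finset V)).PairwiseDisjoint id

/-- `H[W]` has a perfect `T`-tiling: a `T`-tiling whose tiles partition `W`. -/
def HasPerfectTTilingOn {V : Type*} [DecidableEq V] (H : Finset (Finset V)) (W : Finset V) : Prop :=
  ∃ P : Finset (Finset V), IsTTiling H P ∧ P.biUnion id = W

/-- `H` has a perfect `T`-tiling. -/
def HasPerfectTTiling {V : Type*} [DecidableEq V] [Fintype V] (H : Finset (Finset V)) : Prop :=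
  HasPerfectTTilingOn H Finset.univ

/-- `u` and `v` are `(η, r)`-linked in `H`. -/
def Linked {V : Type*} [DecidableEq V] [Fintype V] (H : Finset (Finset V)) (η : ℝ) (r : ℕ)
    (u v : V) : Prop :=
  η * ((Fintype.card V).choose (5 * r - 1) : ℝ) ≤
    (({S : Finset V | S.card = 5 * r - 1 ∧ HasPerfectTTilingOn H (insert u S) ∧
        HasPerfectTTilingOn H (insert v S)} : Set (Finset V)).ncard : ℝ)

/-- `X` is `(η, r)`-closed in `H`. -/
def TClosed {V : Type*} [DecidableEq V] [Fintype V] (H : Finset (Finset V)) (η : ℝ) (r : ℕ)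
    (X : Finset V) : Prop :=
  ∀ u ∈ X, ∀ v ∈ X, Linked H η r u v

section Helpers

variable {V : Type*} [DecidableEq V]

lemma card_triple_le (a b c : V) : ({a, b, c} : Finset V).card ≤ 3 := by
  calc ({a, b, c} : Finset V).card ≤ ({b, c} : Finset V).card + 1 := card_insert_le _ _
    _ ≤ (({c} : Finset V).card + 1) + 1 := Nat.add_le_add_right (card_insert_le _ _) 1
    _ = 3 := by simp

lemma card_quad_le (a b c d : V) : ({a, b, c, d} : Finset V).card ≤ 4 := by
  calc ({a, b, c, d} : Finset V).card ≤ ({b, c, d} : Finset V).card + 1 := card_insert_le _ _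
    _ ≤ 3 + 1 := Nat.add_le_add_right (card_triple_le _ _ _) 1

lemma edge_distinct {H : Finset (Finset V)} (h3 : Is3Graph H) {a b c : V}
    (he : ({a, b, c} : Finset V) ∈ H) : a ≠ b ∧ a ≠ c ∧ b ≠ c := by
  have hc := h3 _ he
  have key : ∀ p q : V, ({a, b, c} : Finset V) ⊆ {p, q} → False := by
    intro p q hsub
    have h1 := Finset.card_le_card hsub
    have h2 : ({p, q} : Finset V).card ≤ 2 := by
      calc ({p, q} : Finset V).card ≤ ({q} : Finset V).card + 1 := card_insert_le _ _
        _ = 2 := by simp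
    omega
  refine ⟨fun h => key a c ?_, fun h => key a b ?_, fun h => key a b ?_⟩ <;> subst h <;>
    intro t ht <;> simp only [mem_insert, mem_singleton] at ht ⊢ <;> tauto

lemma codeg_le_third [Fintype V] {H : Finset (Finset V)} (h3 : Is3Graph H) {c d : V}
    (hcd : c ≠ d) :
    codeg H c d ≤ (univ.filter fun e => ({c, d, e} : Finset V) ∈ H).card := by
  apply Finset.card_le_card_of_surjOn (fun e => insert c (insert d {e}))
  intro E hE
  simp only [coe_filter, Set.mem_setOf_eq, mem_coe, mem_filter, mem_univ, true_and,
    Set.mem_image] at hE ⊢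
  obtain ⟨hEH, hcE, hdE⟩ := hE
  have hsub : ({c, d} : Finset V) ⊆ E := by
    intro t ht
    simp only [mem_insert, mem_singleton] at ht
    rcases ht with rfl | rfl
    exacts [hcE, hdE]
  have hcd2 : ({c, d} : Finset V).card = 2 := by
    rw [card_insert_of_notMem (by simp [hcd]), card_singleton]
  have h1 : (E \ {c, d}).card = 1 := by
    rw [card_sdiff_of_subset hsub, h3 _ hEH, hcd2]
  obtain ⟨e, he⟩ := Finset.card_eq_one.mp h1
  have hEe : E = insert c (insert d {e}) := by
    have hu := Finset.sdiff_union_of_subset hsub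
    rw [he] at hu
    rw [← hu]
    ext t
    simp only [mem_union, mem_sdiff, mem_insert, mem_singleton]
    tauto
  refine ⟨e, ?_, hEe.symm⟩
  rw [← hEe]
  exact hEH

end Helpers

set_option maxHeartbeats 1600000 in
/-- For every `α > 0` there is `η0 > 0` such that for every `0 < η < η0` there is `n0`
such that in any 3-graph on `n ≥ n0` vertices with minimum codegree at least `n/3 + αn`,
any three distinct vertices contain two distinct vertices which are `(η, 1)`-linked. -/
theorem two_of_three_linked :
    ∀ α : ℝ, 0 < α → ∃ η0 : ℝ, 0 < η0 ∧ ∀ η : ℝ, 0 < η → η < η0 →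
      ∃ n0 : ℕ, ∀ n : ℕ, n0 ≤ n →
        ∀ H : Finset (Finset (Fin n)), Is3Graph H →
          (∀ x y : Fin n, x ≠ y → (n : ℝ) / 3 + α * n ≤ (codeg H x y : ℝ)) →
          ∀ x y z : Fin n, x ≠ y → x ≠ z → y ≠ z →
            Linked H η 1 x y ∨ Linked H η 1 x z ∨ Linked H η 1 y z := by
  intro α hα
  refine ⟨α ^ 2 / 10000, by positivity, ?_⟩
  intro η hη hηα
  refine ⟨⌈(20 : ℝ) / α⌉₊ + 20, ?_⟩
  intro n hn H h3 hdeg x y z hxy hxz hyz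
  classical
  have hn20 : 20 ≤ n := by omega
  have hN : (20 : ℝ) ≤ (n : ℝ) := by exact_mod_cast hn20
  have hN0 : (0 : ℝ) < n := by linarith
  have hnα : (20 : ℝ) / α ≤ (n : ℝ) := by
    have h1 := Nat.le_ceil ((20 : ℝ) / α)
    have h2 : (⌈(20 : ℝ) / α⌉₊ : ℝ) ≤ (n : ℝ) := by
      exact_mod_cast le_trans (Nat.le_add_right _ 20) hn
    linarith
  have hαN : (20 : ℝ) ≤ α * n := by
    rw [div_le_iff₀ hα] at hnα
    linarith [hnα]
  -- ordered link pairs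
  set L : Fin n → Finset (Fin n × Fin n) :=
    fun w => univ.filter (fun p => ({w, p.1, p.2} : Finset (Fin n)) ∈ H) with hL
  -- lower bound on link size
  have linkLB : ∀ w : Fin n, ((n : ℝ) - 1) * ((n : ℝ) / 3 + α * n) ≤ ((L w).card : ℝ) := by
    intro w
    have hfib : (L w).card = ∑ a ∈ univ, ((L w).filter (fun p => p.1 = a)).card :=
      card_eq_sum_card_fiberwise (fun p _ => mem_univ _)
    have hfib2 : ∀ a : Fin n, a ≠ w →
        (n : ℝ) / 3 + α * n ≤ (((L w).filter (fun p => p.1 = a)).card : ℝ) := by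
      intro a haw
      have h1 : codeg H w a ≤ (univ.filter fun e => ({w, a, e} : Finset (Fin n)) ∈ H).card :=
        codeg_le_third h3 haw.symm
      have h2 : (univ.filter fun e => ({w, a, e} : Finset (Fin n)) ∈ H).card ≤
          ((L w).filter (fun p => p.1 = a)).card := by
        apply card_le_card_of_injOn (fun b => (a, b))
        · intro b hb
          simp only [mem_coe, mem_filter, mem_univ, true_and, hL] at hb ⊢
          exact ⟨hb, trivial⟩
        · intro b _ b' _ hbb
          exact (Prod.mk.injEq _ _ _ _).mp hbb |>.2
      have h4 := hdeg w a haw.symm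
      calc (n : ℝ) / 3 + α * n ≤ (codeg H w a : ℝ) := h4
        _ ≤ _ := by exact_mod_cast le_trans h1 h2
    have hcast : ((n - 1 : ℕ) : ℝ) = (n : ℝ) - 1 := by
      rw [Nat.cast_sub (by omega), Nat.cast_one]
    calc ((n : ℝ) - 1) * ((n : ℝ) / 3 + α * n)
        = ∑ _a ∈ univ.erase w, ((n : ℝ) / 3 + α * n) := by
          rw [sum_const, card_erase_of_mem (mem_univ w), card_univ, Fintype.card_fin,
            nsmul_eq_mul, hcast]
      _ ≤ ∑ a ∈ univ.erase w, (((L w).filter (fun p => p.1 = a)).card : ℝ) :=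
          sum_le_sum (fun a ha => hfib2 a (ne_of_mem_erase ha))
      _ ≤ ∑ a ∈ univ, (((L w).filter (fun p => p.1 = a)).card : ℝ) :=
          sum_le_sum_of_subset_of_nonneg (subset_univ _) (by intros; positivity)
      _ = ((L w).card : ℝ) := by rw [hfib]; push_cast; ring
  -- main lemma: a pair with many common link pairs is linked
  have main : ∀ u v : Fin n, α * ((n : ℝ) - 1) * n ≤ (((L u ∩ L v).card) : ℝ) →
      Linked H η 1 u v := by
    intro u v hG
    set G := L u ∩ L v with hGdef
    set M := ((G.card : ℕ) : ℝ) with hM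
    set NB : Fin n → Finset (Fin n) := fun b => univ.filter (fun c => (b, c) ∈ G) with hNB
    have hdsum : ∑ b ∈ univ, (NB b).card = G.card := by
      rw [card_eq_sum_card_fiberwise (f := Prod.fst) (t := univ) (fun p _ => mem_univ _)]
      apply Finset.sum_congr rfl
      intro b _
      apply Finset.card_nbij (i := fun c => (b, c))
      · intro c hc
        simp only [hNB, mem_coe, mem_filter, mem_univ, true_and] at hc
        simp only [mem_coe, mem_filter]
        exact ⟨hc, trivial⟩
      · intro c _ c' _ hcc
        exact (Prod.mk.injEq _ _ _ _).mp hcc |>.2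
      · intro p hp
        simp only [coe_filter, Set.mem_setOf_eq, mem_coe] at hp
        have hpe : (b, p.2) = p := by
          rw [← hp.2]
        refine ⟨p.2, ?_, hpe⟩
        simp only [coe_filter, Set.mem_setOf_eq, mem_coe, hNB, mem_filter, mem_univ, true_and]
        rw [hpe]
        exact hp.1
    -- cherry count
    set Cher := univ.sigma (fun b => (NB b).offDiag) with hCher
    have hCherCard : Cher.card = ∑ b ∈ univ, ((NB b).card * (NB b).card - (NB b).card) := by
      rw [hCher, card_sigma]
      exact sum_congr rfl (fun b _ => offDiag_card _)
    have castsub : ∀ k : ℕ, ((k * k - k : ℕ) : ℝ) = (k : ℝ) * k - k := by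
      intro k
      cases k with
      | zero => simp
      | succ j =>
          rw [Nat.cast_sub (Nat.le_mul_of_pos_left _ (Nat.succ_pos j))]
          push_cast
          ring
    have hCherR : M * M / (n : ℝ) - M ≤ (Cher.card : ℝ) := by
      have hsq : (∑ b ∈ univ, ((NB b).card : ℝ)) ^ 2 ≤
          (n : ℝ) * ∑ b ∈ univ, ((NB b).card : ℝ) ^ 2 := by
        have h := sq_sum_le_card_mul_sum_sq (s := (univ : Finset (Fin n)))
          (f := fun b => ((NB b).card : ℝ))
        simpa [card_univ] using h
      have hsumM : ∑ b ∈ univ, ((NB b).card : ℝ) = M := by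
        rw [hM, ← hdsum]
        push_cast
        ring
      have hCC : (Cher.card : ℝ) = ∑ b ∈ univ, (((NB b).card : ℝ) * (NB b).card - (NB b).card) := by
        rw [hCherCard, Nat.cast_sum]
        exact sum_congr rfl (fun b _ => castsub _)
      rw [hCC, Finset.sum_sub_distrib, hsumM]
      have h2 : M * M / (n : ℝ) ≤ ∑ b ∈ univ, (((NB b).card : ℝ) * (NB b).card) := by
        rw [div_le_iff₀ hN0]
        have : M ^ 2 ≤ (n : ℝ) * ∑ b ∈ univ, ((NB b).card : ℝ) ^ 2 := hsumM ▸ hsq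
        calc M * M = M ^ 2 := by ring
          _ ≤ (n : ℝ) * ∑ b ∈ univ, ((NB b).card : ℝ) ^ 2 := this
          _ = (∑ b ∈ univ, (((NB b).card : ℝ) * (NB b).card)) * (n : ℝ) := by
              rw [mul_comm]
              congr 1
              exact sum_congr rfl (fun b _ => by ring)
      linarith
    -- extension sets
    set Es : (Σ _ : Fin n, Fin n × Fin n) → Finset (Fin n) := fun t =>
      univ.filter (fun e => ({t.2.1, t.2.2, e} : Finset (Fin n)) ∈ H ∧ e ≠ t.1 ∧ e ≠ u ∧ e ≠ v)
      with hEsdef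
    have hEsLB : ∀ t ∈ Cher, (n : ℝ) / 3 ≤ ((Es t).card : ℝ) := by
      intro t ht
      rw [hCher, mem_sigma] at ht
      obtain ⟨-, ht2⟩ := ht
      rw [mem_offDiag] at ht2
      obtain ⟨-, -, hne⟩ := ht2
      have hcd := hdeg t.2.1 t.2.2 hne
      have hcle := codeg_le_third (H := H) h3 hne
      have hsub : (univ.filter fun e => ({t.2.1, t.2.2, e} : Finset (Fin n)) ∈ H) ⊆
          Es t ∪ {t.1, u, v} := by
        intro e he
        simp only [mem_filter, mem_univ, true_and] at he
        by_cases h1' : e = t.1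
        · subst h1'; exact mem_union_right _ (by simp)
        by_cases h2' : e = u
        · subst h2'; exact mem_union_right _ (by simp)
        by_cases h3' : e = v
        · subst h3'; exact mem_union_right _ (by simp)
        apply mem_union_left
        simp only [hEsdef, mem_filter, mem_univ, true_and]
        exact ⟨he, h1', h2', h3'⟩
      have hcard : (univ.filter fun e => ({t.2.1, t.2.2, e} : Finset (Fin n)) ∈ H).card ≤
          (Es t).card + 3 := by
        refine le_trans (card_le_card hsub) (le_trans (card_union_le _ _) ?_)
        have h33 := card_triple_le t.1 u v
        omega
      have hR : (codeg H t.2.1 t.2.2 : ℝ) ≤ ((Es t).card : ℝ) + 3 := by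
        exact_mod_cast le_trans hcle hcard
      linarith
    -- the big family Q
    set Q := Cher.sigma (fun t => Es t) with hQdef
    have hQs : (Q.card : ℝ) = ∑ t ∈ Cher, ((Es t).card : ℝ) := by
      have : Q.card = ∑ t ∈ Cher, (Es t).card := by
        rw [hQdef]
        exact card_sigma _ _
      rw [this]
      push_cast
      ring
    have hQcard : (Cher.card : ℝ) * ((n : ℝ) / 3) ≤ (Q.card : ℝ) := by
      rw [hQs]
      calc (Cher.card : ℝ) * ((n : ℝ) / 3) = ∑ _t ∈ Cher, ((n : ℝ) / 3) := by
            rw [sum_const, nsmul_eq_mul]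
        _ ≤ ∑ t ∈ Cher, ((Es t).card : ℝ) := sum_le_sum hEsLB
    -- the target family F
    set F := (univ.powersetCard 4).filter (fun S => HasPerfectTTilingOn H (insert u S) ∧
      HasPerfectTTilingOn H (insert v S)) with hFdef
    set f : (Σ _ : (Σ _ : Fin n, Fin n × Fin n), Fin n) → Finset (Fin n) :=
      fun q => {q.1.1, q.1.2.1, q.1.2.2, q.2} with hfdef
    have hmapsF : ∀ q ∈ Q, f q ∈ F := by
      rintro ⟨⟨b, c, d⟩, e⟩ hq
      rw [hQdef, mem_sigma] at hq
      obtain ⟨hq1, hq2⟩ := hq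
      rw [hCher, mem_sigma] at hq1
      obtain ⟨-, hq1⟩ := hq1
      rw [mem_offDiag] at hq1
      obtain ⟨hcN, hdN, hcd⟩ := hq1
      simp only [hNB, mem_filter, mem_univ, true_and] at hcN hdN
      rw [hGdef, mem_inter] at hcN hdN
      simp only [hL, mem_filter, mem_univ, true_and] at hcN hdN
      obtain ⟨hubc, hvbc⟩ := hcN
      obtain ⟨hubd, hvbd⟩ := hdN
      simp only [hEsdef, mem_filter, mem_univ, true_and] at hq2
      obtain ⟨hcde, heb, heu, hev⟩ := hq2
      obtain ⟨hub, huc, hbc⟩ := edge_distinct h3 hubc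
      obtain ⟨hvb, hvc, -⟩ := edge_distinct h3 hvbc
      obtain ⟨-, hud, hbd⟩ := edge_distinct h3 hubd
      obtain ⟨-, hvd, -⟩ := edge_distinct h3 hvbd
      obtain ⟨-, hce, hde⟩ := edge_distinct h3 hcde
      have hbS : b ∉ ({c, d, e} : Finset (Fin n)) := by
        simp only [mem_insert, mem_singleton]
        push_neg
        exact ⟨hbc, hbd, fun h => heb h.symm⟩
      have hcS : c ∉ ({d, e} : Finset (Fin n)) := by
        simp only [mem_insert, mem_singleton]
        push_neg
        exact ⟨hcd, fun h => hce h⟩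
      have hdS : d ∉ ({e} : Finset (Fin n)) := by
        simp only [mem_singleton]
        exact hde
      have hS4 : ({b, c, d, e} : Finset (Fin n)).card = 4 := by
        rw [card_insert_of_notMem hbS, card_insert_of_notMem hcS,
          card_insert_of_notMem hdS, card_singleton]
      have huS : u ∉ ({b, c, d, e} : Finset (Fin n)) := by
        simp only [mem_insert, mem_singleton]
        push_neg
        exact ⟨hub, huc, hud, fun h => heu h.symm⟩
      have hvS : v ∉ ({b, c, d, e} : Finset (Fin n)) := by
        simp only [mem_insert, mem_singleton]
        push_neg
        exact ⟨hvb, hvc, hvd, fun h => hev h.symm⟩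
      have htileu : HasPerfectTTilingOn H (insert u ({b, c, d, e} : Finset (Fin n))) := by
        refine ⟨{insert u ({b, c, d, e} : Finset (Fin n))}, ⟨?_, ?_⟩, by simp⟩
        · intro S hS
          rw [mem_singleton] at hS
          subst hS
          exact ⟨u, b, c, d, e, by rw [show ({u, b, c, d, e} : Finset (Fin n)) =
            insert u ({b, c, d, e} : Finset (Fin n)) from rfl,
            card_insert_of_notMem huS, hS4], rfl, hubc, hubd, hcde⟩
        · rw [coe_singleton]
          exact Set.pairwiseDisjoint_singleton _ _
      have htilev : HasPerfectTTilingOn H (insert v ({b, c, d, e} : Finset (Fin n))) := by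
        refine ⟨{insert v ({b, c, d, e} : Finset (Fin n))}, ⟨?_, ?_⟩, by simp⟩
        · intro S hS
          rw [mem_singleton] at hS
          subst hS
          exact ⟨v, b, c, d, e, by rw [show ({v, b, c, d, e} : Finset (Fin n)) =
            insert v ({b, c, d, e} : Finset (Fin n)) from rfl,
            card_insert_of_notMem hvS, hS4], rfl, hvbc, hvbd, hcde⟩
        · rw [coe_singleton]
          exact Set.pairwiseDisjoint_singleton _ _
      rw [hFdef, mem_filter, mem_powersetCard]
      exact ⟨⟨subset_univ _, hS4⟩, htileu, htilev⟩
    have hQF : Q.card ≤ 256 * F.card := by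
      have hfiber : ∀ S ∈ Q.image f, (Q.filter (fun q => f q = S)).card ≤ 256 := by
        intro S hS
        have hScard : S.card ≤ 4 := by
          obtain ⟨q, -, rfl⟩ := mem_image.mp hS
          exact card_quad_le _ _ _ _
        have hinj : (Q.filter (fun q => f q = S)).card ≤ ((S ×ˢ S) ×ˢ (S ×ˢ S)).card := by
          apply card_le_card_of_injOn (fun q => ((q.1.1, q.1.2.1), (q.1.2.2, q.2)))
          · intro q hq
            rw [mem_coe, mem_filter] at hq
            obtain ⟨-, hfq⟩ := hq
            have h1 : q.1.1 ∈ S := by rw [← hfq]; simp [hfdef]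
            have h2 : q.1.2.1 ∈ S := by rw [← hfq]; simp [hfdef]
            have h3' : q.1.2.2 ∈ S := by rw [← hfq]; simp [hfdef]
            have h4 : q.2 ∈ S := by rw [← hfq]; simp [hfdef]
            simp only [mem_coe, mem_product]
            exact ⟨⟨h1, h2⟩, h3', h4⟩
          · rintro ⟨⟨b, c, d⟩, e⟩ - ⟨⟨b', c', d'⟩, e'⟩ - hEq
            simp only [Prod.mk.injEq] at hEq
            obtain ⟨⟨rfl, rfl⟩, rfl, rfl⟩ := hEq
            rfl
        refine le_trans hinj ?_
        have hcp : ((S ×ˢ S) ×ˢ (S ×ˢ S)).card = S.card * S.card * (S.card * S.card) := by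
          simp [card_product]
        rw [hcp]
        calc S.card * S.card * (S.card * S.card) ≤ 4 * 4 * (4 * 4) := by
              exact Nat.mul_le_mul (Nat.mul_le_mul hScard hScard)
                (Nat.mul_le_mul hScard hScard)
          _ = 256 := by norm_num
      calc Q.card = ∑ S ∈ Q.image f, (Q.filter (fun q => f q = S)).card :=
            card_eq_sum_card_image f Q
        _ ≤ (Q.image f).card • 256 := sum_le_card_nsmul _ _ 256 hfiber
        _ = 256 * (Q.image f).card := by rw [smul_eq_mul, Nat.mul_comm]
        _ ≤ 256 * F.card := Nat.mul_le_mul_left _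
            (card_le_card (image_subset_iff.mpr hmapsF))
    -- numeric conclusion
    have hset : {S : Finset (Fin n) | S.card = 5 * 1 - 1 ∧ HasPerfectTTilingOn H (insert u S) ∧
        HasPerfectTTilingOn H (insert v S)} = (F : Set (Finset (Fin n))) := by
      ext S
      rw [hFdef]
      simp only [Set.mem_setOf_eq, coe_filter, mem_powersetCard, Set.mem_setOf_eq, mem_coe,
        mem_filter]
      constructor
      · rintro ⟨h1, h2, h3'⟩
        exact ⟨⟨subset_univ _, h1⟩, h2, h3'⟩
      · rintro ⟨⟨-, h1⟩, h2, h3'⟩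
        exact ⟨h1, h2, h3'⟩
    rw [Linked, hset, Set.ncard_coe_finset, Fintype.card_fin]
    have hchoose : ((n.choose (5 * 1 - 1) : ℕ) : ℝ) ≤ (n : ℝ) ^ 4 := by
      have := Nat.choose_le_pow n (5 * 1 - 1)
      calc ((n.choose (5 * 1 - 1) : ℕ) : ℝ) ≤ ((n ^ (5 * 1 - 1) : ℕ) : ℝ) := by exact_mod_cast this
        _ = (n : ℝ) ^ 4 := by norm_num
    have hQFR : (Q.card : ℝ) ≤ 256 * (F.card : ℝ) := by exact_mod_cast hQF
    have hM0 : (0 : ℝ) ≤ M := by rw [hM]; exact Nat.cast_nonneg _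
    have h20a : 20 * α ≤ α * (n : ℝ) := by nlinarith
    have h19' : (19 : ℝ) ≤ α * ((n : ℝ) - 1) := by nlinarith
    have hM19 : 19 * (n : ℝ) ≤ M := by
      nlinarith [mul_nonneg (sub_nonneg.mpr h19') hN0.le]
    have hMa : (19 / 20) * (α * (n : ℝ) ^ 2) ≤ M := by
      nlinarith [mul_nonneg (mul_nonneg hα.le hN0.le)
        (by linarith : (0 : ℝ) ≤ (n : ℝ) - 1 - (19 / 20) * (n : ℝ))]
    have hMM : α ^ 2 * (n : ℝ) ^ 4 / 8 + M * (n : ℝ) ≤ M * M := by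
      have hmn : M * (19 * (n : ℝ)) ≤ M * M := mul_le_mul_of_nonneg_left hM19 hM0
      have hsq2 : ((19 / 20) * (α * (n : ℝ) ^ 2)) * ((19 / 20) * (α * (n : ℝ) ^ 2)) ≤ M * M :=
        mul_le_mul hMa hMa (by positivity) hM0
      nlinarith [hmn, hsq2]
    have hNC : α ^ 2 * (n : ℝ) ^ 4 / 8 ≤ (n : ℝ) * (Cher.card : ℝ) := by
      have h5 := mul_le_mul_of_nonneg_left hCherR hN0.le
      rw [mul_sub, mul_div_cancel₀ _ (ne_of_gt hN0)] at h5
      linarith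
    have hQ0 : α ^ 2 * (n : ℝ) ^ 4 / 24 ≤ (Q.card : ℝ) := by
      nlinarith [hQcard, hNC]
    have hF0 : α ^ 2 * (n : ℝ) ^ 4 / 6144 ≤ (F.card : ℝ) := by linarith
    have h1 : η * ((n.choose (5 * 1 - 1) : ℕ) : ℝ) ≤ η * (n : ℝ) ^ 4 :=
      mul_le_mul_of_nonneg_left hchoose hη.le
    have h2 : η * (n : ℝ) ^ 4 ≤ (α ^ 2 / 10000) * (n : ℝ) ^ 4 :=
      mul_le_mul_of_nonneg_right hηα.le (by positivity)
    have h3'' : (α ^ 2 / 10000) * (n : ℝ) ^ 4 ≤ α ^ 2 * (n : ℝ) ^ 4 / 6144 := by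
      nlinarith [sq_nonneg α, pow_nonneg hN0.le 4]
    linarith
  -- inclusion-exclusion among the three links
  have hsub3 : L x ∪ L y ∪ L z ⊆ (univ : Finset (Fin n)).offDiag := by
    intro p hp
    rw [mem_offDiag]
    refine ⟨mem_univ _, mem_univ _, ?_⟩
    simp only [mem_union, hL, mem_filter, mem_univ, true_and] at hp
    rcases hp with (hp | hp) | hp
    · exact (edge_distinct h3 hp).2.2
    · exact (edge_distinct h3 hp).2.2
    · exact (edge_distinct h3 hp).2.2
  have union_le : (L x ∪ L y ∪ L z).card ≤ n * n - n := by
    refine le_trans (card_le_card hsub3) ?_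
    rw [offDiag_card, card_univ, Fintype.card_fin]
  have interSum : (L x).card + (L y).card + (L z).card ≤ (n * n - n) +
      ((L x ∩ L y).card + (L x ∩ L z).card + (L y ∩ L z).card) := by
    have e1 := card_union_add_card_inter (L x) (L y)
    have e2 := card_union_add_card_inter (L x ∪ L y) (L z)
    have e3 : ((L x ∪ L y) ∩ L z).card ≤ (L x ∩ L z).card + (L y ∩ L z).card := by
      rw [union_inter_distrib_right]
      exact card_union_le _ _
    omega
  have hcastnn : ((n * n - n : ℕ) : ℝ) = (n : ℝ) * n - n := by
    rw [Nat.cast_sub (Nat.le_mul_of_pos_left _ (by omega : 0 < n))]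
    push_cast
    ring
  have hsumR : 3 * α * ((n : ℝ) - 1) * n ≤ ((L x ∩ L y).card : ℝ) +
      ((L x ∩ L z).card : ℝ) + ((L y ∩ L z).card : ℝ) := by
    have hR : ((L x).card : ℝ) + ((L y).card : ℝ) + ((L z).card : ℝ) ≤
        ((n * n - n : ℕ) : ℝ) + (((L x ∩ L y).card : ℝ) + ((L x ∩ L z).card : ℝ) +
        ((L y ∩ L z).card : ℝ)) := by
      exact_mod_cast interSum
    rw [hcastnn] at hR
    have c1 := linkLB x
    have c2 := linkLB y
    have c3 := linkLB z
    nlinarith [c1, c2, c3, hR]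
  rcases le_or_gt (α * ((n : ℝ) - 1) * n) (((L x ∩ L y).card) : ℝ) with h | h
  · exact Or.inl (main x y h)
  rcases le_or_gt (α * ((n : ℝ) - 1) * n) (((L x ∩ L z).card) : ℝ) with h' | h'
  · exact Or.inr (Or.inl (main x z h'))
  rcases le_or_gt (α * ((n : ℝ) - 1) * n) (((L y ∩ L z).card) : ℝ) with h'' | h''
  · exact Or.inr (Or.inr (main y z h''))
  exfalso
  linarith
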